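/- Let $X$ be a Banach space, $X^*$ its dual, $x^* \in X^* \setminus \{0\}$, and $(x_n^*)$ a weak*-null sequence in $X^*$. Then $\limsup_{n\to\infty} \|x^* + x_n^*\| \ge \|x^*\| \left(1 + \overline\delta_X^*\left( \frac{\limsup_n \|x_n^*\|}{\|x^*\|} \right)\right)$, where $\overline\delta_X^*$ is the modulus of weak* asymptotic uniform convexity of $X^*$. -/

import Mathlib

set_option synthInstance.maxHeartbeats 1000000
set_option maxHeartbeats 1000000

open Filter NormedSpace

/-- The modulus of weak* asymptotic uniform convexity of `X*`:
`δ̄*_X(t) = inf_{‖x*‖=1} sup_E inf_{y* ∈ ∂B_E} ‖x* + t y*‖ - 1`, where `E` runs over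
the weak*-closed finite-codimensional subspaces of `X*`, i.e. over the annihilators
of finite subsets of `X`. -/
noncomputable def deltaStar (X : Type*) [NormedAddCommGroup X] [NormedSpace ℝ X] (t : ℝ) : ℝ :=
  ⨅ xs : {φ : StrongDual ℝ X // ‖φ‖ = 1},
    ⨆ F : Finset X,
      ⨅ ys : {ψ : StrongDual ℝ X // ‖ψ‖ = 1 ∧ ∀ v ∈ F, ψ v = 0},
        (‖xs.1 + t • ys.1‖ - 1)




lemma exists_perturb {X : Type*} [NormedAddCommGroup X] [NormedSpace ℝ X] (F : Finset X) :
    ∃ K : ℝ, 0 ≤ K ∧ ∀ χ : StrongDual ℝ X, ∃ ζ : StrongDual ℝ X,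
      (∀ v ∈ F, ζ v = 0) ∧ ‖χ - ζ‖ ≤ K * ∑ v ∈ F, ‖χ v‖ := by
  classical
  set Y : Submodule ℝ X := Submodule.span ℝ (F : Set X) with hY
  haveI : FiniteDimensional ℝ Y := FiniteDimensional.span_of_finite ℝ F.finite_toSet
  obtain ⟨s, hsF, hspan, hli⟩ := exists_linearIndependent ℝ (F : Set X)
  haveI : Fintype ↥s := (F.finite_toSet.subset hsF).fintype
  -- basis of Y from elements of s ⊆ F
  have hrange : Set.range ((↑) : s → X) = s := Subtype.range_coe
  have heq : Submodule.span ℝ (Set.range ((↑) : s → X)) = Y := by rw [hrange, hY, hspan]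
  let b : Module.Basis s ℝ Y := (Module.Basis.span hli).map (LinearEquiv.ofEq _ _ heq)
  have hb : ∀ i : s, ((b i : Y) : X) = (i : X) := by
    intro i
    have : (b i : Y) = LinearEquiv.ofEq _ _ heq (Module.Basis.span hli i) := rfl
    rw [this]
    have h2 : ((LinearEquiv.ofEq _ _ heq (Module.Basis.span hli i) : Y) : X)
        = ((Module.Basis.span hli i : Submodule.span ℝ (Set.range ((↑) : s → X))) : X) := rfl
    rw [h2, Module.Basis.span_apply]
  -- coordinate functionals are continuous
  let G : s → (Y →L[ℝ] ℝ) := fun i => LinearMap.toContinuousLinearMap (b.coord i)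
  set K : ℝ := ∑ i : s, ‖G i‖ with hK
  have hK0 : 0 ≤ K := Finset.sum_nonneg fun i _ => ContinuousLinearMap.opNorm_nonneg _
  -- the key norm bound for functionals on Y
  have hbound : ∀ f : Y →L[ℝ] ℝ, ‖f‖ ≤ ∑ i : s, ‖G i‖ * ‖f (b i)‖ := by
    intro f
    refine f.opNorm_le_bound (Finset.sum_nonneg fun i _ =>
      mul_nonneg (ContinuousLinearMap.opNorm_nonneg _) (norm_nonneg _)) fun y => ?_
    have hrepr : ∑ i : s, b.repr y i • b i = y := b.sum_repr y
    have hfy : f y = ∑ i : s, b.repr y i * f (b i) := by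
      conv_lhs => rw [← hrepr]
      rw [map_sum]
      exact Finset.sum_congr rfl fun i _ => by rw [map_smul, smul_eq_mul]
    calc ‖f y‖ = ‖∑ i : s, b.repr y i * f (b i)‖ := by rw [hfy]
      _ ≤ ∑ i : s, ‖b.repr y i * f (b i)‖ := norm_sum_le _ _
      _ ≤ ∑ i : s, (‖G i‖ * ‖f (b i)‖) * ‖y‖ := by
          refine Finset.sum_le_sum fun i _ => ?_
          rw [norm_mul]
          have h1 : ‖b.repr y i‖ ≤ ‖G i‖ * ‖y‖ := by
            have : b.repr y i = G i y := rfl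
            rw [this]
            exact (G i).le_opNorm y
          calc ‖b.repr y i‖ * ‖f (b i)‖ ≤ (‖G i‖ * ‖y‖) * ‖f (b i)‖ :=
                mul_le_mul_of_nonneg_right h1 (norm_nonneg _)
            _ = (‖G i‖ * ‖f (b i)‖) * ‖y‖ := by ring
      _ = (∑ i : s, ‖G i‖ * ‖f (b i)‖) * ‖y‖ := by rw [Finset.sum_mul]
  refine ⟨K, hK0, fun χ => ?_⟩
  set f : Y →L[ℝ] ℝ := χ.comp Y.subtypeL with hfdef
  obtain ⟨η, hext, hnorm⟩ := exists_extension_norm_eq Y f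
  refine ⟨χ - η, fun v hv => ?_, ?_⟩
  · have hvY : v ∈ Y := Submodule.subset_span hv
    have : η v = f ⟨v, hvY⟩ := hext ⟨v, hvY⟩
    simp only [ContinuousLinearMap.sub_apply, this, hfdef, ContinuousLinearMap.comp_apply,
      Submodule.subtypeL_apply, sub_self]
  · have h1 : χ - (χ - η) = η := sub_sub_cancel χ η
    rw [h1, hnorm]
    refine (hbound f).trans ?_
    have hterm : ∀ i : s, ‖G i‖ * ‖f (b i)‖ ≤ ‖G i‖ * ∑ v ∈ F, ‖χ v‖ := by
      intro i
      have h2 : f (b i) = χ ((b i : Y) : X) := rfl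
      have h3 : ‖f (b i)‖ ≤ ∑ v ∈ F, ‖χ v‖ := by
        rw [h2, hb i]
        exact Finset.single_le_sum (fun w _ => norm_nonneg (χ w)) (hsF i.2)
      exact mul_le_mul_of_nonneg_left h3 (ContinuousLinearMap.opNorm_nonneg _)
    calc ∑ i : s, ‖G i‖ * ‖f (b i)‖ ≤ ∑ i : s, ‖G i‖ * ∑ v ∈ F, ‖χ v‖ :=
          Finset.sum_le_sum fun i _ => hterm i
      _ = K * ∑ v ∈ F, ‖χ v‖ := by rw [← Finset.sum_mul]

section Helpers

variable {X : Type*} [NormedAddCommGroup X] [NormedSpace ℝ X]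

lemma neg_one_le_iInf (x : StrongDual ℝ X) (t : ℝ) (F : Finset X) :
    -1 ≤ ⨅ ys : {ψ : StrongDual ℝ X // ‖ψ‖ = 1 ∧ ∀ v ∈ F, ψ v = 0}, (‖x + t • ys.1‖ - 1) := by
  cases isEmpty_or_nonempty {ψ : StrongDual ℝ X // ‖ψ‖ = 1 ∧ ∀ v ∈ F, ψ v = 0} with
  | inl h => rw [Real.iInf_of_isEmpty]; norm_num
  | inr h =>
    exact le_ciInf fun ys => by
      have := norm_nonneg (x + t • ys.1); linarith

lemma neg_one_le_iSup (x : StrongDual ℝ X) (t : ℝ) :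
    -1 ≤ ⨆ F : Finset X,
      ⨅ ys : {ψ : StrongDual ℝ X // ‖ψ‖ = 1 ∧ ∀ v ∈ F, ψ v = 0}, (‖x + t • ys.1‖ - 1) := by
  by_cases hb : BddAbove (Set.range fun F : Finset X =>
      ⨅ ys : {ψ : StrongDual ℝ X // ‖ψ‖ = 1 ∧ ∀ v ∈ F, ψ v = 0}, (‖x + t • ys.1‖ - 1))
  · exact le_ciSup_of_le hb ∅ (neg_one_le_iInf x t ∅)
  · rw [Real.iSup_of_not_bddAbove hb]; norm_num

end Helpers

/-- For any weak*-null sequence `(x*_n)` in `X*` and any `x* ≠ 0`,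
`limsup ‖x* + x*_n‖ ≥ ‖x*‖ (1 + δ̄*_X(limsup ‖x*_n‖ / ‖x*‖))`. -/
theorem limsup_ge_of_weakStarNull (X : Type*) [NormedAddCommGroup X] [NormedSpace ℝ X]
    [CompleteSpace X] (φ : StrongDual ℝ X) (hφ : φ ≠ 0) (ψ : ℕ → StrongDual ℝ X)
    (hw : ∀ v : X, Tendsto (fun n => ψ n v) atTop (nhds 0)) :
    ‖φ‖ * (1 + deltaStar X (atTop.limsup (fun n => ‖ψ n‖) / ‖φ‖)) ≤
      atTop.limsup fun n => ‖φ + ψ n‖ := by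
  classical
  set c : ℝ := ‖φ‖ with hc_def
  have hc : 0 < c := norm_pos_iff.mpr hφ
  -- Banach–Steinhaus: the sequence is norm bounded
  obtain ⟨C, hC⟩ : ∃ C, ∀ n, ‖ψ n‖ ≤ C := by
    have hpt : ∀ v : X, ∃ C, ∀ n, ‖ψ n v‖ ≤ C := by
      intro v
      obtain ⟨C, hC⟩ := ((hw v).norm.bddAbove_range).imp fun C hC => hC
      exact ⟨C, fun n => hC (Set.mem_range_self n)⟩
    exact banach_steinhaus hpt
  set s : ℝ := atTop.limsup (fun n => ‖ψ n‖) with hs_def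
  set L : ℝ := atTop.limsup (fun n => ‖φ + ψ n‖) with hL_def
  have hbψ : IsBoundedUnder (· ≤ ·) atTop (fun n => ‖ψ n‖) :=
    isBoundedUnder_of ⟨C, hC⟩
  have hbψ' : IsBoundedUnder (· ≥ ·) atTop (fun n => ‖ψ n‖) :=
    isBoundedUnder_of ⟨0, fun n => norm_nonneg _⟩
  have hbφψ : IsBoundedUnder (· ≤ ·) atTop (fun n => ‖φ + ψ n‖) :=
    isBoundedUnder_of ⟨c + C, fun n => (norm_add_le _ _).trans (by gcongr; exact hC n)⟩
  have hs0 : 0 ≤ s :=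
    le_limsup_of_frequently_le (Eventually.of_forall (fun n => norm_nonneg _)).frequently hbψ
  -- c ≤ L
  have hcL : c ≤ L := by
    refine le_of_forall_pos_le_add fun ε hε => ?_
    have h1 : c - ε / 2 < ‖φ‖ := by rw [← hc_def]; linarith
    obtain ⟨x, hx1, hx2⟩ := φ.exists_lt_apply_of_lt_opNorm h1
    have hev : ∀ᶠ n in atTop, c - ε ≤ ‖φ + ψ n‖ := by
      have hx0 : Tendsto (fun n => ‖ψ n x‖) atTop (nhds 0) := by simpa using (hw x).norm
      filter_upwards [hx0.eventually_lt_const (show (0:ℝ) < ε / 2 by linarith)]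
        with n hn
      have h3 : ‖(φ + ψ n) x‖ ≤ ‖φ + ψ n‖ := by
        calc ‖(φ + ψ n) x‖ ≤ ‖φ + ψ n‖ * ‖x‖ := (φ + ψ n).le_opNorm x
          _ ≤ ‖φ + ψ n‖ * 1 := by
              exact mul_le_mul_of_nonneg_left hx1.le (norm_nonneg _)
          _ = ‖φ + ψ n‖ := mul_one _
      have h4 : ‖φ x‖ - ‖ψ n x‖ ≤ ‖(φ + ψ n) x‖ := by
        have : (φ + ψ n) x = φ x + ψ n x := rfl
        rw [this]
        calc ‖φ x‖ - ‖ψ n x‖ ≤ ‖φ x + ψ n x‖ := by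
              have := norm_add_le (φ x + ψ n x) (-(ψ n x))
              simp only [add_neg_cancel_right, norm_neg] at this
              linarith
          _ = ‖φ x + ψ n x‖ := rfl
      have : c - ε / 2 - ε / 2 ≤ ‖(φ + ψ n) x‖ := by
        calc c - ε / 2 - ε / 2 ≤ ‖φ x‖ - ‖ψ n x‖ := by
              have := hx2.le; linarith [hn.le]
          _ ≤ ‖(φ + ψ n) x‖ := h4
      have hh : c - ε ≤ ‖(φ + ψ n) x‖ := by linarith
      linarith
    have := le_limsup_of_frequently_le hev.frequently hbφψ
    linarith
  have hL0 : 0 < L := lt_of_lt_of_le hc hcL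
  -- key bound for each F
  have key : ∀ F : Finset X,
      (⨅ ys : {ψ' : StrongDual ℝ X // ‖ψ'‖ = 1 ∧ ∀ v ∈ F, ψ' v = 0},
        (‖(c⁻¹ • φ : StrongDual ℝ X) + (s / c) • ys.1‖ - 1)) ≤ L / c - 1 := by
    intro F
    have hLc1 : 1 ≤ L / c := (one_le_div hc).mpr hcL
    cases isEmpty_or_nonempty {ψ' : StrongDual ℝ X // ‖ψ'‖ = 1 ∧ ∀ v ∈ F, ψ' v = 0} with
    | inl h =>
      rw [Real.iInf_of_isEmpty]
      linarith
    | inr h =>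
      have hBdd : BddBelow (Set.range fun ys : {ψ' : StrongDual ℝ X // ‖ψ'‖ = 1 ∧ ∀ v ∈ F, ψ' v = 0} =>
          (‖(c⁻¹ • φ : StrongDual ℝ X) + (s / c) • ys.1‖ - 1)) := by
        refine ⟨-1, ?_⟩
        rintro r ⟨ys, rfl⟩
        have := norm_nonneg ((c⁻¹ • φ : StrongDual ℝ X) + (s / c) • ys.1); linarith
      by_cases hs : s = 0
      · obtain ⟨ys⟩ := h
        refine (ciInf_le hBdd ys).trans ?_
        rw [hs]
        have h1 : ((0:ℝ) / c) • ys.1 = 0 := by rw [zero_div, zero_smul]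
        rw [h1, add_zero]
        have h2 : ‖(c⁻¹ • φ : StrongDual ℝ X)‖ = 1 := by
          rw [hc_def]; exact norm_smul_inv_norm hφ
        rw [h2]
        linarith
      · have hs' : 0 < s := lt_of_le_of_ne hs0 (Ne.symm hs)
        refine le_of_forall_pos_le_add fun ε hε => ?_
        obtain ⟨K, hK0, hKb⟩ := exists_perturb F
        set δ : ℝ := min (s / 8) (ε * c / 4) with hδ_def
        have hδ : 0 < δ := lt_min (by linarith) (by positivity)
        have hδs : δ ≤ s / 8 := min_le_left _ _
        have hδε : δ ≤ ε * c / 4 := min_le_right _ _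
        -- find a good index n
        have hev1 : ∀ᶠ n in atTop, ∑ v ∈ F, ‖ψ n v‖ < δ / (K + 1) := by
          have htend : Tendsto (fun n => ∑ v ∈ F, ‖ψ n v‖) atTop (nhds 0) := by
            have h0 : ∀ v : X, Tendsto (fun n => ‖ψ n v‖) atTop (nhds 0) := fun v => by
              simpa using (hw v).norm
            have : Tendsto (fun n => ∑ v ∈ F, ‖ψ n v‖) atTop (nhds (∑ v ∈ F, (0:ℝ))) :=
              tendsto_finset_sum _ fun v _ => h0 v
            simpa using this
          exact htend.eventually_lt_const (by positivity)
        have hev2 : ∀ᶠ n in atTop, ‖ψ n‖ < s + δ :=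
          eventually_lt_of_limsup_lt (by rw [← hs_def]; linarith) hbψ
        have hev3 : ∀ᶠ n in atTop, ‖φ + ψ n‖ < L + δ :=
          eventually_lt_of_limsup_lt (by rw [← hL_def]; linarith) hbφψ
        have hfreq : ∃ᶠ n in atTop, s - δ < ‖ψ n‖ :=
          frequently_lt_of_lt_limsup (hbψ'.isCoboundedUnder_le) (by rw [← hs_def]; linarith)
        obtain ⟨n, ⟨⟨hn1, hn2⟩, hn3⟩, hn4⟩ :=
          (((hev1.and hev2).and hev3).and_frequently hfreq).exists
        obtain ⟨ζ, hζF, hζb⟩ := hKb (ψ n)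
        have hζd : ‖ψ n - ζ‖ ≤ δ := by
          have h1 : K * ∑ v ∈ F, ‖ψ n v‖ ≤ K * (δ / (K + 1)) :=
            mul_le_mul_of_nonneg_left hn1.le hK0
          have h2 : K * (δ / (K + 1)) ≤ δ := by
            rw [mul_comm, div_mul_eq_mul_div, div_le_iff₀ (by linarith : (0:ℝ) < K + 1)]
            nlinarith
          linarith
        have hζn : ‖ψ n‖ - δ ≤ ‖ζ‖ := by
          have := norm_sub_norm_le (ψ n) ζ
          linarith [abs_le.mp (abs_norm_sub_norm_le (ψ n) ζ) |>.1]
        have hζpos : 0 < ‖ζ‖ := by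
          have : s - 2 * δ ≤ ‖ζ‖ := by linarith
          linarith
        have hζ0 : ζ ≠ 0 := norm_pos_iff.mp hζpos
        set u : StrongDual ℝ X := ‖ζ‖⁻¹ • ζ with hu_def
        have hu1 : ‖u‖ = 1 := norm_smul_inv_norm hζ0
        have huF : ∀ v ∈ F, u v = 0 := by
          intro v hv
          have : u v = ‖ζ‖⁻¹ * ζ v := rfl
          rw [this, hζF v hv, mul_zero]
        set ys : {ψ' : StrongDual ℝ X // ‖ψ'‖ = 1 ∧ ∀ v ∈ F, ψ' v = 0} := ⟨u, hu1, huF⟩ with hys_def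
        refine (ciInf_le hBdd ys).trans ?_
        -- main norm estimate
        have hfactor : (c⁻¹ • φ : StrongDual ℝ X) + (s / c) • ys.1
            = c⁻¹ • (φ + (s / ‖ζ‖) • ζ) := by
          rw [smul_add]
          congr 1
          have : ys.1 = u := rfl
          rw [this, hu_def, smul_smul, smul_smul]
          congr 1
          field_simp
        have hnorm1 : ‖(c⁻¹ • φ : StrongDual ℝ X) + (s / c) • ys.1‖
            = c⁻¹ * ‖φ + (s / ‖ζ‖) • ζ‖ := by
          rw [hfactor, norm_smul, Real.norm_eq_abs, abs_of_pos (by positivity)]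
        have hζne : ‖ζ‖ ≠ 0 := ne_of_gt hζpos
        have hsub : (s / ‖ζ‖) • ζ - ζ = ((s - ‖ζ‖) / ‖ζ‖) • ζ := by
          have hsc : (s - ‖ζ‖) / ‖ζ‖ = s / ‖ζ‖ - 1 := by field_simp
          rw [hsc]
          have e := sub_smul (s / ‖ζ‖) (1:ℝ) ζ
          rw [one_smul] at e
          exact e.symm
        have hdiff : ‖(s / ‖ζ‖) • ζ - ζ‖ = |s - ‖ζ‖| := by
          rw [hsub, norm_smul, Real.norm_eq_abs, abs_div, abs_of_pos hζpos]
          field_simp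
        have habs : |s - ‖ζ‖| ≤ 2 * δ := by
          rw [abs_le]
          constructor
          · have h1 : ‖ζ‖ ≤ ‖ψ n‖ + δ := by
              have h5 := abs_le.mp (abs_norm_sub_norm_le (ψ n) ζ)
              linarith [h5.1, h5.2]
            have h2 := hn2.le
            linarith
          · linarith
        have hφζ : ‖φ + ζ‖ ≤ L + 2 * δ := by
          have h1 : ‖φ + ζ‖ ≤ ‖φ + ψ n‖ + ‖ζ - ψ n‖ := by
            have : φ + ζ = (φ + ψ n) + (ζ - ψ n) := by abel
            rw [this]; exact norm_add_le _ _
          have h2 : ‖ζ - ψ n‖ = ‖ψ n - ζ‖ := norm_sub_rev _ _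
          linarith [hn3.le]
        have hmain : ‖φ + (s / ‖ζ‖) • ζ‖ ≤ L + 4 * δ := by
          have h1 : φ + (s / ‖ζ‖) • ζ = (φ + ζ) + ((s / ‖ζ‖) • ζ - ζ) := by abel
          calc ‖φ + (s / ‖ζ‖) • ζ‖ ≤ ‖φ + ζ‖ + ‖(s / ‖ζ‖) • ζ - ζ‖ := by
                rw [h1]; exact norm_add_le _ _
            _ ≤ (L + 2 * δ) + 2 * δ := by rw [hdiff]; linarith
            _ = L + 4 * δ := by ring
        have hfinal : c⁻¹ * ‖φ + (s / ‖ζ‖) • ζ‖ ≤ L / c + ε := by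
          have h1 : c⁻¹ * ‖φ + (s / ‖ζ‖) • ζ‖ ≤ c⁻¹ * (L + 4 * δ) :=
            mul_le_mul_of_nonneg_left hmain (by positivity)
          have h2 : c⁻¹ * (L + 4 * δ) = L / c + 4 * δ / c := by
            field_simp
          have h3 : 4 * δ / c ≤ ε := by
            rw [div_le_iff₀ hc]
            linarith
          linarith
        rw [hnorm1]
        linarith
  -- assemble
  have hxs : ‖(c⁻¹ • φ : StrongDual ℝ X)‖ = 1 := by rw [hc_def]; exact norm_smul_inv_norm hφ
  set xs : {φ' : StrongDual ℝ X // ‖φ'‖ = 1} := ⟨c⁻¹ • φ, hxs⟩ with hxs_def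
  have h1 : deltaStar X (s / c) ≤ ⨆ F : Finset X,
      ⨅ ys : {ψ' : StrongDual ℝ X // ‖ψ'‖ = 1 ∧ ∀ v ∈ F, ψ' v = 0},
        (‖(c⁻¹ • φ : StrongDual ℝ X) + (s / c) • ys.1‖ - 1) := by
    unfold deltaStar
    exact ciInf_le ⟨-1, by rintro r ⟨zs, rfl⟩; exact neg_one_le_iSup zs.1 (s / c)⟩ xs
  have h2 : (⨆ F : Finset X,
      ⨅ ys : {ψ' : StrongDual ℝ X // ‖ψ'‖ = 1 ∧ ∀ v ∈ F, ψ' v = 0},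
        (‖(c⁻¹ • φ : StrongDual ℝ X) + (s / c) • ys.1‖ - 1)) ≤ L / c - 1 :=
    ciSup_le key
  have hd : deltaStar X (s / c) ≤ L / c - 1 := h1.trans h2
  calc c * (1 + deltaStar X (s / c)) ≤ c * (1 + (L / c - 1)) := by
        exact mul_le_mul_of_nonneg_left (by linarith) hc.le
    _ = c * (L / c) := by ring
    _ = L := by field_simp
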